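/- (Conditional variance as seminorm, RL case) Conditional on the history up to state x_t (so ρ_{0:t-1} is fixed) with a_t ~ μ(·|x_t), for any vector F_t : Fin K → ℝ, Var[ρ_{0:t-1} π(a_t|x_t) q(a_t)/μ(a_t|x_t) - F_t(a_t)/μ(a_t|x_t) | x_t] = ‖F_t - ρ_{0:t-1}·(π(·|x_t) ⊙ q)‖²_{M_t}, where q : Fin K → ℝ, (π ⊙ q)(a) = π(a|x_t) q(a), and M_t = diag(1/μ(a|x_t)) - J. -/

import Mathlib

open Matrix BigOperators

/-- Expectation of `f A` for `A ~ μ` on `Fin K`. -/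
def expec {K : ℕ} (μ : Fin K → ℝ) (f : Fin K → ℝ) : ℝ := ∑ a, μ a * f a

/-- Variance of `f A` for `A ~ μ`. -/
def variance' {K : ℕ} (μ : Fin K → ℝ) (f : Fin K → ℝ) : ℝ :=
  expec μ (fun a => (f a - expec μ f) ^ 2)

/-- conditional variance as seminorm, RL case: conditional
on the history (so `ρ_{0:t-1} = ρpre` is a fixed scalar) with `a_t ~ μ`,
`Var[ρpre·π(a)q(a)/μ(a) - F(a)/μ(a)] = ‖F - ρpre·(π ⊙ q)‖²_M`
for `M = diag(1/μ) - J`. -/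
theorem stmt_17 (K : ℕ) (hK : 1 ≤ K)
    (μ π : Fin K → ℝ)
    (hμpos : ∀ a, 0 < μ a) (hμsum : ∑ a, μ a = 1)
    (hπnonneg : ∀ a, 0 ≤ π a) (hπsum : ∑ a, π a = 1)
    (ρpre : ℝ) (q F : Fin K → ℝ) :
    variance' μ (fun a => ρpre * π a * q a / μ a - F a / μ a)
      = (fun a => F a - ρpre * (π a * q a)) ⬝ᵥ
          ((Matrix.diagonal (fun a => (μ a)⁻¹)
            - Matrix.of (fun _ _ : Fin K => (1 : ℝ))) *ᵥ
            (fun a => F a - ρpre * (π a * q a))) := by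
  set g : Fin K → ℝ := fun a => F a - ρpre * (π a * q a) with hg
  have hμne : ∀ a, μ a ≠ 0 := fun a => (hμpos a).ne'
  have hf : ∀ a, ρpre * π a * q a / μ a - F a / μ a = -(g a / μ a) := by
    intro a
    rw [div_sub_div_same, ← neg_div]
    congr 1
    simp only [hg]
    ring
  clear_value g
  set S : ℝ := ∑ a, g a with hS
  have hE : expec μ (fun a => -(g a / μ a)) = -S := by
    unfold expec
    rw [hS, ← Finset.sum_neg_distrib]
    congr 1; ext a
    rw [mul_neg, mul_comm, div_mul_cancel₀ _ (hμne a)]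
  have hLHS : variance' μ (fun a => ρpre * π a * q a / μ a - F a / μ a)
      = ∑ a, (g a)^2 / μ a - S^2 := by
    unfold variance'
    simp only [hf]
    rw [hE]
    unfold expec
    have key : ∀ a : Fin K, μ a * (-(g a / μ a) - -S)^2
        = (g a)^2 / μ a - 2 * (g a) * S + μ a * S^2 := by
      intro a
      have h := hμne a
      field_simp
      ring
    rw [Finset.sum_congr rfl (fun a _ => key a)]
    rw [Finset.sum_add_distrib, Finset.sum_sub_distrib, ← Finset.sum_mul,
      ← Finset.sum_mul, hμsum]
    have h2 : ∑ i : Fin K, 2 * g i = 2 * S := by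
      rw [hS, Finset.mul_sum]
    rw [h2]
    ring
  rw [hLHS]
  simp only [dotProduct, Matrix.mulVec, Matrix.sub_apply, Matrix.diagonal,
    Matrix.of_apply, dotProduct]
  have key2 : ∀ a : Fin K, g a * (∑ b, ((if a = b then (μ a)⁻¹ else 0) - 1) * g b)
      = (g a)^2 / μ a - g a * S := by
    intro a
    have : (∑ b, ((if a = b then (μ a)⁻¹ else 0) - 1) * g b)
        = (∑ b, if a = b then (μ a)⁻¹ * g b else 0) - S := by
      rw [hS, ← Finset.sum_sub_distrib]
      congr 1; ext b
      by_cases h : a = b <;> simp [h] <;> ring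
    rw [this, Finset.sum_ite_eq Finset.univ a (fun b => (μ a)⁻¹ * g b)]
    simp only [Finset.mem_univ, if_true]
    have h := hμne a
    field_simp
  rw [Finset.sum_congr rfl (fun a _ => key2 a), Finset.sum_sub_distrib,
    ← Finset.sum_mul, ← hS]
  ring
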